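/- Let λ ∈ ℝ, set μ_j := −j⁴π⁴ + λ j²π², and let a ∈ ℝ with a ∉ 𝒩₁. Then there exists a constant C > 0 such that for every square-summable sequence (ĉ_k)_{k≥1} of complex numbers and every positive integer j, the series ∑_{k≥1, k≠j} ĉ_k · (a + μ_k) / ((a + μ_k − μ_j) · √2 kπ) converges absolutely and its absolute value is at most C · (∑_{k≥1} |ĉ_k|²)^{1/2}. -/

import Mathlib

open Real

lemma tsum_cs {ι : Type*} (f g : ι → ℝ) (hf0 : ∀ i, 0 ≤ f i) (hg0 : ∀ i, 0 ≤ g i)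
    (hf : Summable (fun i => f i ^ 2)) (hg : Summable (fun i => g i ^ 2)) :
    Summable (fun i => f i * g i) ∧
    ∑' i, f i * g i ≤ Real.sqrt (∑' i, f i ^ 2) * Real.sqrt (∑' i, g i ^ 2) := by
  have hsum : Summable (fun i => f i * g i) := by
    apply Summable.of_nonneg_of_le (fun i => mul_nonneg (hf0 i) (hg0 i))
      (fun i => ?_) ((hf.add hg).div_const 2)
    nlinarith [sq_nonneg (f i - g i)]
  refine ⟨hsum, Summable.tsum_le_of_sum_le hsum fun s => ?_⟩
  have h1 : (∑ i ∈ s, f i * g i) ^ 2 ≤ (∑ i ∈ s, f i ^ 2) * (∑ i ∈ s, g i ^ 2) :=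
    Finset.sum_mul_sq_le_sq_mul_sq s f g
  have h2 : ∑ i ∈ s, f i ^ 2 ≤ ∑' i, f i ^ 2 := Summable.sum_le_tsum s (fun i _ => sq_nonneg _) hf
  have h3 : ∑ i ∈ s, g i ^ 2 ≤ ∑' i, g i ^ 2 := Summable.sum_le_tsum s (fun i _ => sq_nonneg _) hg
  have h4 : 0 ≤ ∑ i ∈ s, f i * g i := Finset.sum_nonneg fun i _ => mul_nonneg (hf0 i) (hg0 i)
  calc ∑ i ∈ s, f i * g i = Real.sqrt ((∑ i ∈ s, f i * g i) ^ 2) := (Real.sqrt_sq h4).symm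
    _ ≤ Real.sqrt ((∑' i, f i ^ 2) * (∑' i, g i ^ 2)) := Real.sqrt_le_sqrt (by
          refine h1.trans (mul_le_mul h2 h3 ?_ ?_)
          · exact Finset.sum_nonneg fun i _ => sq_nonneg _
          · exact tsum_nonneg fun i => sq_nonneg _)
    _ = _ := Real.sqrt_mul (tsum_nonneg fun i => sq_nonneg _) _

set_option maxHeartbeats 1000000 in
theorem stmt14 (lam a : ℝ) (mu : ℕ+ → ℝ)
    (hmu : ∀ j : ℕ+, mu j = -(j : ℝ) ^ 4 * π ^ 4 + lam * (j : ℝ) ^ 2 * π ^ 2)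
    (ha : a ∉ {x : ℝ | ∃ j k : ℕ+, x = mu k - mu j}) :
    ∃ C > (0 : ℝ), ∀ c : ℕ+ → ℂ, Summable (fun k : ℕ+ => ‖c k‖ ^ 2) →
      ∀ j : ℕ+,
        Summable (fun k : {k : ℕ+ // k ≠ j} =>
          ‖c k * ((a + mu k : ℝ) : ℂ) /
            (((a + mu k - mu j : ℝ) : ℂ) * ((Real.sqrt 2 * ((k : ℕ+) : ℝ) * π : ℝ) : ℂ))‖) ∧
        ‖∑' k : {k : ℕ+ // k ≠ j},
            c k * ((a + mu k : ℝ) : ℂ) /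
              (((a + mu k - mu j : ℝ) : ℂ) *
                ((Real.sqrt 2 * ((k : ℕ+) : ℝ) * π : ℝ) : ℂ))‖
          ≤ C * Real.sqrt (∑' k : ℕ+, ‖c k‖ ^ 2) := by
  have hπ : (0:ℝ) < π := Real.pi_pos
  have hcast1 : ∀ k : ℕ+, (1:ℝ) ≤ (k:ℝ) := fun k => by exact_mod_cast k.one_le
  have hne : ∀ j k : ℕ+, a + mu k - mu j ≠ 0 := by
    intro j k h
    exact ha ⟨k, j, by linarith⟩
  -- numerator bound
  have hnum : ∀ k : ℕ+, |a + mu k| ≤ (|a| + π ^ 4 + |lam| * π ^ 2) * (k:ℝ) ^ 4 := by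
    intro k
    have hk := hcast1 k
    have hk0 : (0:ℝ) ≤ (k:ℝ) := le_trans zero_le_one hk
    have hk24 : (k:ℝ) ^ 2 ≤ (k:ℝ) ^ 4 := pow_le_pow_right₀ hk (by norm_num)
    have hk4 : (1:ℝ) ≤ (k:ℝ) ^ 4 := by nlinarith [sq_nonneg ((k:ℝ) - 1), hk24]
    have e1 : lam * ((k:ℝ) ^ 2 * π ^ 2) ≤ |lam| * ((k:ℝ) ^ 2 * π ^ 2) :=
      mul_le_mul_of_nonneg_right (le_abs_self lam) (by positivity)
    have e2 : -(|lam| * ((k:ℝ) ^ 2 * π ^ 2)) ≤ lam * ((k:ℝ) ^ 2 * π ^ 2) := by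
      have := mul_le_mul_of_nonneg_right (neg_abs_le lam) (by positivity : (0:ℝ) ≤ (k:ℝ) ^ 2 * π ^ 2)
      linarith
    have e3 : |lam| * π ^ 2 * (k:ℝ) ^ 2 ≤ |lam| * π ^ 2 * (k:ℝ) ^ 4 :=
      mul_le_mul_of_nonneg_left hk24 (by positivity)
    have e4 : |a| ≤ |a| * (k:ℝ) ^ 4 := le_mul_of_one_le_right (abs_nonneg a) hk4
    have e5 : (0:ℝ) ≤ π ^ 4 * (k:ℝ) ^ 4 := by positivity
    rw [hmu, abs_le]
    constructor <;> [nlinarith [neg_abs_le a, abs_nonneg a]; nlinarith [le_abs_self a, abs_nonneg a]]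
  -- denominator lower bound
  have hdenl : ∃ δ > (0:ℝ), ∀ j k : ℕ+, k ≠ j →
      δ * ((k:ℝ) ^ 3 * |(k:ℝ) - (j:ℝ)|) ≤ |a + mu k - mu j| := by
    obtain ⟨N, hN⟩ := exists_nat_ge (4 * |lam| / π ^ 2 + 4 * |a| / π ^ 4 + 1)
    have hN1 : (1:ℝ) ≤ (N:ℝ) := by
      have h1 : 0 ≤ 4 * |lam| / π ^ 2 := by positivity
      have h2 : 0 ≤ 4 * |a| / π ^ 4 := by positivity
      linarith
    have hN0 : (0:ℝ) ≤ (N:ℝ) := le_trans zero_le_one hN1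
    have hNsq : (N:ℝ) ≤ (N:ℝ) ^ 2 := by nlinarith
    have hNcub : (N:ℝ) ≤ (N:ℝ) ^ 3 := by nlinarith
    have hNlam : 4 * |lam| ≤ π ^ 2 * (N:ℝ) ^ 2 := by
      have h2 : 0 ≤ 4 * |a| / π ^ 4 := by positivity
      have h3 : 4 * |lam| / π ^ 2 ≤ (N:ℝ) := by linarith
      have := (div_le_iff₀ (by positivity : (0:ℝ) < π ^ 2)).mp h3
      nlinarith [sq_nonneg π]
    have hNa : 4 * |a| ≤ π ^ 4 * (N:ℝ) ^ 3 := by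
      have h1 : 0 ≤ 4 * |lam| / π ^ 2 := by positivity
      have h3 : 4 * |a| / π ^ 4 ≤ (N:ℝ) := by linarith
      have := (div_le_iff₀ (by positivity : (0:ℝ) < π ^ 4)).mp h3
      nlinarith [pow_pos hπ 4]
    classical
    set F : ℕ × ℕ → ℝ := fun p =>
      if h : 0 < p.1 ∧ 0 < p.2 then |a + mu ⟨p.2, h.2⟩ - mu ⟨p.1, h.1⟩| else 1 with hF
    have hFpos : ∀ p, 0 < F p := by
      intro p
      by_cases h : 0 < p.1 ∧ 0 < p.2
      · simp only [hF, dif_pos h]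
        exact abs_pos.mpr (hne _ _)
      · simp [hF, dif_neg h]
    obtain ⟨p0, -, hp0min⟩ := (Finset.range (N+1) ×ˢ Finset.range (N+1)).exists_min_image F
      ⟨(0,0), by simp⟩
    have hmpos : 0 < F p0 := hFpos p0
    refine ⟨min (π ^ 4 / 2) (F p0 / (N:ℝ) ^ 4), by positivity, ?_⟩
    intro j k hkj
    have hx1 : (1:ℝ) ≤ (k:ℝ) := hcast1 k
    have hy1 : (1:ℝ) ≤ (j:ℝ) := hcast1 j
    have hx0 : (0:ℝ) ≤ (k:ℝ) := le_trans zero_le_one hx1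
    have hy0 : (0:ℝ) ≤ (j:ℝ) := le_trans zero_le_one hy1
    have hxy1 : 1 ≤ |(k:ℝ) - (j:ℝ)| := by
      have hkj' : ((k:ℕ):ℤ) ≠ ((j:ℕ):ℤ) := by
        simp only [ne_eq, Nat.cast_inj]
        exact fun h => hkj (PNat.coe_injective h)
      have h1 : (1:ℤ) ≤ |((k:ℕ):ℤ) - ((j:ℕ):ℤ)| := Int.one_le_abs (sub_ne_zero.mpr hkj')
      have h2 : ((1:ℤ):ℝ) ≤ ((|((k:ℕ):ℤ) - ((j:ℕ):ℤ)|:ℤ):ℝ) := by exact_mod_cast h1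
      push_cast at h2
      convert h2 using 2
    by_cases hsmall : (k:ℕ) ≤ N ∧ (j:ℕ) ≤ N
    · have hxN : (k:ℝ) ≤ (N:ℝ) := by exact_mod_cast hsmall.1
      have hyN : (j:ℝ) ≤ (N:ℝ) := by exact_mod_cast hsmall.2
      have hmem : ((j:ℕ), (k:ℕ)) ∈ Finset.range (N+1) ×ˢ Finset.range (N+1) := by
        simp only [Finset.mem_product, Finset.mem_range, Nat.lt_succ_iff]
        exact ⟨hsmall.2, hsmall.1⟩
      have hFval : F ((j:ℕ), (k:ℕ)) = |a + mu k - mu j| := by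
        have hpos : 0 < ((j:ℕ), (k:ℕ)).1 ∧ 0 < ((j:ℕ), (k:ℕ)).2 := ⟨j.pos, k.pos⟩
        simp only [hF, dif_pos hpos]
        congr 2
      have hmD : F p0 ≤ |a + mu k - mu j| := hFval ▸ hp0min _ hmem
      have hprod : (k:ℝ) ^ 3 * |(k:ℝ) - (j:ℝ)| ≤ (N:ℝ) ^ 4 := by
        have habs : |(k:ℝ) - (j:ℝ)| ≤ (N:ℝ) := by
          rw [abs_sub_le_iff]; constructor <;> linarith
        have hx3 : (k:ℝ) ^ 3 ≤ (N:ℝ) ^ 3 := pow_le_pow_left₀ hx0 hxN 3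
        calc (k:ℝ) ^ 3 * |(k:ℝ) - (j:ℝ)| ≤ (N:ℝ) ^ 3 * (N:ℝ) :=
              mul_le_mul hx3 habs (abs_nonneg _) (by positivity)
          _ = (N:ℝ) ^ 4 := by ring
      calc min (π ^ 4 / 2) (F p0 / (N:ℝ) ^ 4) * ((k:ℝ) ^ 3 * |(k:ℝ) - (j:ℝ)|)
          ≤ (F p0 / (N:ℝ) ^ 4) * (N:ℝ) ^ 4 :=
            mul_le_mul (min_le_right _ _) hprod (by positivity) (by positivity)
        _ = F p0 := by field_simp
        _ ≤ |a + mu k - mu j| := hmD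
    · have hmax : (N:ℝ) ≤ max (k:ℝ) (j:ℝ) := by
        rcases not_and_or.mp hsmall with h | h
        · have h' : N < (k:ℕ) := not_le.mp h
          have : (N:ℝ) ≤ (k:ℝ) := by exact_mod_cast h'.le
          exact le_max_of_le_left this
        · have h' : N < (j:ℕ) := not_le.mp h
          have : (N:ℝ) ≤ (j:ℝ) := by exact_mod_cast h'.le
          exact le_max_of_le_right this
      have hxM : (k:ℝ) ≤ max (k:ℝ) (j:ℝ) := le_max_left _ _
      have hyM : (j:ℝ) ≤ max (k:ℝ) (j:ℝ) := le_max_right _ _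
      have hM1 : (1:ℝ) ≤ max (k:ℝ) (j:ℝ) := le_trans hx1 hxM
      have hM0 : (0:ℝ) ≤ max (k:ℝ) (j:ℝ) := le_trans zero_le_one hM1
      have hsabs : |(k:ℝ) ^ 4 - (j:ℝ) ^ 4| = |(k:ℝ) - (j:ℝ)| *
          ((k:ℝ) ^ 3 + (k:ℝ) ^ 2 * (j:ℝ) + (k:ℝ) * (j:ℝ) ^ 2 + (j:ℝ) ^ 3) := by
        have h : (k:ℝ) ^ 4 - (j:ℝ) ^ 4 = ((k:ℝ) - (j:ℝ)) *
            ((k:ℝ) ^ 3 + (k:ℝ) ^ 2 * (j:ℝ) + (k:ℝ) * (j:ℝ) ^ 2 + (j:ℝ) ^ 3) := by ring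
        rw [h, abs_mul,
          abs_of_pos (show (0:ℝ) < (k:ℝ) ^ 3 + (k:ℝ) ^ 2 * (j:ℝ) + (k:ℝ) * (j:ℝ) ^ 2 + (j:ℝ) ^ 3
            by nlinarith [mul_nonneg (mul_nonneg hx0 hx0) hy0, mul_nonneg hx0 (mul_nonneg hy0 hy0),
              pow_nonneg hy0 3])]
      have hcubpos : (0:ℝ) ≤ (k:ℝ) ^ 2 * (j:ℝ) + (k:ℝ) * (j:ℝ) ^ 2 + (j:ℝ) ^ 3 := by positivity
      have hf1 : (k:ℝ) ^ 3 * |(k:ℝ) - (j:ℝ)| ≤ |(k:ℝ) ^ 4 - (j:ℝ) ^ 4| := by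
        rw [hsabs]
        nlinarith [abs_nonneg ((k:ℝ) - (j:ℝ))]
      have hcub : max (k:ℝ) (j:ℝ) ^ 3 ≤
          (k:ℝ) ^ 3 + (k:ℝ) ^ 2 * (j:ℝ) + (k:ℝ) * (j:ℝ) ^ 2 + (j:ℝ) ^ 3 := by
        rcases le_total (k:ℝ) (j:ℝ) with h | h
        · rw [max_eq_right h]
          nlinarith [pow_nonneg hx0 3, mul_nonneg (mul_nonneg hx0 hx0) hy0,
            mul_nonneg hx0 (mul_nonneg hy0 hy0)]
        · rw [max_eq_left h]
          nlinarith [pow_nonneg hy0 3, mul_nonneg (mul_nonneg hx0 hx0) hy0,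
            mul_nonneg hx0 (mul_nonneg hy0 hy0)]
      have hf2 : max (k:ℝ) (j:ℝ) ^ 3 ≤ |(k:ℝ) ^ 4 - (j:ℝ) ^ 4| := by
        rw [hsabs]
        nlinarith [abs_nonneg ((k:ℝ) - (j:ℝ)), pow_nonneg hM0 3]
      have hf3 : |(k:ℝ) ^ 2 - (j:ℝ) ^ 2| * max (k:ℝ) (j:ℝ) ^ 2 ≤ |(k:ℝ) ^ 4 - (j:ℝ) ^ 4| := by
        have hst : (k:ℝ) ^ 4 - (j:ℝ) ^ 4 = ((k:ℝ) ^ 2 - (j:ℝ) ^ 2) * ((k:ℝ) ^ 2 + (j:ℝ) ^ 2) := by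
          ring
        rw [hst, abs_mul, abs_of_pos (by nlinarith : (0:ℝ) < (k:ℝ) ^ 2 + (j:ℝ) ^ 2)]
        have h2 : max (k:ℝ) (j:ℝ) ^ 2 ≤ (k:ℝ) ^ 2 + (j:ℝ) ^ 2 := by
          rcases le_total (k:ℝ) (j:ℝ) with h | h
          · rw [max_eq_right h]; nlinarith
          · rw [max_eq_left h]; nlinarith
        nlinarith [abs_nonneg ((k:ℝ) ^ 2 - (j:ℝ) ^ 2)]
      have htri : π ^ 4 * |(k:ℝ) ^ 4 - (j:ℝ) ^ 4| ≤
          |a + mu k - mu j| + |a| + |lam| * π ^ 2 * |(k:ℝ) ^ 2 - (j:ℝ) ^ 2| := by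
        have h1 : π ^ 4 * ((k:ℝ) ^ 4 - (j:ℝ) ^ 4) =
            a + lam * ((k:ℝ) ^ 2 - (j:ℝ) ^ 2) * π ^ 2 - (a + mu k - mu j) := by
          rw [hmu, hmu]; ring
        have h2 : |π ^ 4 * ((k:ℝ) ^ 4 - (j:ℝ) ^ 4)| ≤
            |a| + |lam * ((k:ℝ) ^ 2 - (j:ℝ) ^ 2) * π ^ 2| + |a + mu k - mu j| := by
          rw [h1]
          calc |a + lam * ((k:ℝ) ^ 2 - (j:ℝ) ^ 2) * π ^ 2 - (a + mu k - mu j)|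
              ≤ |a + lam * ((k:ℝ) ^ 2 - (j:ℝ) ^ 2) * π ^ 2| + |a + mu k - mu j| := abs_sub _ _
            _ ≤ |a| + |lam * ((k:ℝ) ^ 2 - (j:ℝ) ^ 2) * π ^ 2| + |a + mu k - mu j| := by
                have := abs_add_le a (lam * ((k:ℝ) ^ 2 - (j:ℝ) ^ 2) * π ^ 2); linarith
        rw [abs_mul, abs_of_pos (by positivity : (0:ℝ) < π ^ 4)] at h2
        rw [abs_mul, abs_mul, abs_of_pos (by positivity : (0:ℝ) < π ^ 2)] at h2
        linarith
      have hlam' : 4 * (|lam| * π ^ 2 * |(k:ℝ) ^ 2 - (j:ℝ) ^ 2|) ≤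
          π ^ 4 * |(k:ℝ) ^ 4 - (j:ℝ) ^ 4| := by
        have hMN2 : π ^ 2 * (N:ℝ) ^ 2 ≤ π ^ 2 * max (k:ℝ) (j:ℝ) ^ 2 := by
          have : (N:ℝ) ^ 2 ≤ max (k:ℝ) (j:ℝ) ^ 2 := pow_le_pow_left₀ hN0 hmax 2
          nlinarith [sq_nonneg π]
        have h1 : 4 * |lam| * |(k:ℝ) ^ 2 - (j:ℝ) ^ 2| ≤
            π ^ 2 * max (k:ℝ) (j:ℝ) ^ 2 * |(k:ℝ) ^ 2 - (j:ℝ) ^ 2| :=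
          mul_le_mul_of_nonneg_right (by linarith) (abs_nonneg _)
        have h2 : π ^ 2 * (max (k:ℝ) (j:ℝ) ^ 2 * |(k:ℝ) ^ 2 - (j:ℝ) ^ 2|) ≤
            π ^ 2 * |(k:ℝ) ^ 4 - (j:ℝ) ^ 4| :=
          mul_le_mul_of_nonneg_left (by linarith [hf3]) (by positivity)
        nlinarith [sq_nonneg π]
      have ha' : 4 * |a| ≤ π ^ 4 * |(k:ℝ) ^ 4 - (j:ℝ) ^ 4| := by
        have h1 : π ^ 4 * (N:ℝ) ^ 3 ≤ π ^ 4 * max (k:ℝ) (j:ℝ) ^ 3 :=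
          mul_le_mul_of_nonneg_left (pow_le_pow_left₀ hN0 hmax 3) (by positivity)
        have h2 : π ^ 4 * max (k:ℝ) (j:ℝ) ^ 3 ≤ π ^ 4 * |(k:ℝ) ^ 4 - (j:ℝ) ^ 4| :=
          mul_le_mul_of_nonneg_left hf2 (by positivity)
        linarith
      have hDbig : π ^ 4 / 2 * |(k:ℝ) ^ 4 - (j:ℝ) ^ 4| ≤ |a + mu k - mu j| := by linarith
      calc min (π ^ 4 / 2) (F p0 / (N:ℝ) ^ 4) * ((k:ℝ) ^ 3 * |(k:ℝ) - (j:ℝ)|)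
          ≤ π ^ 4 / 2 * |(k:ℝ) ^ 4 - (j:ℝ) ^ 4| :=
            mul_le_mul (min_le_left _ _) hf1 (by positivity) (by positivity)
        _ ≤ |a + mu k - mu j| := hDbig
  obtain ⟨δ, hδ, hden⟩ := hdenl
  have hs2 : (0:ℝ) < Real.sqrt 2 := Real.sqrt_pos.mpr two_pos
  set A1 : ℝ := |a| + π ^ 4 + |lam| * π ^ 2 with hA1def
  have hA1 : 0 < A1 := by positivity
  set B : ℝ := A1 / (δ * (Real.sqrt 2 * π)) with hBdef
  have hB : 0 < B := div_pos hA1 (mul_pos hδ (mul_pos hs2 hπ))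
  have hTsummable : Summable (fun n : ℤ => 1 / (n:ℝ) ^ 2) :=
    Real.summable_one_div_int_pow.mpr one_lt_two
  set T : ℝ := ∑' (n : ℤ), 1 / (n:ℝ) ^ 2 with hTdef
  have hT0 : 0 ≤ T := tsum_nonneg fun n => by positivity
  -- coefficient bound
  have hxyne : ∀ (j k : ℕ+), k ≠ j → (0:ℝ) < |(k:ℝ) - (j:ℝ)| := by
    intro j k hkj
    refine abs_pos.mpr (sub_ne_zero.mpr ?_)
    intro h
    exact hkj (PNat.coe_injective (Nat.cast_injective h))
  have hpos2 : ∀ k : ℕ+, (0:ℝ) < Real.sqrt 2 * (k:ℝ) * π := by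
    intro k
    have h1 := hcast1 k
    have h0 : (0:ℝ) < (k:ℝ) := lt_of_lt_of_le zero_lt_one h1
    positivity
  have hcoef : ∀ (j k : ℕ+), k ≠ j →
      |a + mu k| / (|a + mu k - mu j| * (Real.sqrt 2 * (k:ℝ) * π)) ≤ B / |(k:ℝ) - (j:ℝ)| := by
    intro j k hkj
    have hx1 := hcast1 k
    have hx0 : (0:ℝ) < (k:ℝ) := lt_of_lt_of_le zero_lt_one hx1
    have hd1 := hden j k hkj
    have hxy := hxyne j k hkj
    have hdpos : (0:ℝ) < δ * ((k:ℝ) ^ 3 * |(k:ℝ) - (j:ℝ)|) * (Real.sqrt 2 * (k:ℝ) * π) :=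
      mul_pos (mul_pos hδ (mul_pos (pow_pos hx0 3) hxy)) (hpos2 k)
    have step : |a + mu k| / (|a + mu k - mu j| * (Real.sqrt 2 * (k:ℝ) * π)) ≤
        (A1 * (k:ℝ) ^ 4) /
          (δ * ((k:ℝ) ^ 3 * |(k:ℝ) - (j:ℝ)|) * (Real.sqrt 2 * (k:ℝ) * π)) := by
      apply div_le_div₀ (by positivity) (hnum k) hdpos
      exact mul_le_mul_of_nonneg_right hd1 (hpos2 k).le
    refine step.trans (le_of_eq ?_)
    rw [hBdef]
    field_simp
  refine ⟨B * Real.sqrt T + 1, ?_, ?_⟩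
  · have := mul_nonneg hB.le (Real.sqrt_nonneg T)
    linarith
  intro c hc j
  set g : {k : ℕ+ // k ≠ j} → ℝ := fun k =>
    |a + mu k| / (|a + mu k - mu j| * (Real.sqrt 2 * ((k : ℕ+):ℝ) * π)) with hgdef
  have hg0 : ∀ k, 0 ≤ g k := fun k => div_nonneg (abs_nonneg _)
    (mul_nonneg (abs_nonneg _) (hpos2 _).le)
  set e : {k : ℕ+ // k ≠ j} → ℤ := fun k => (((k : ℕ+):ℕ):ℤ) - ((j:ℕ):ℤ) with hedef
  have he : Function.Injective e := by
    intro k1 k2 h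
    simp only [hedef, sub_left_inj, Nat.cast_inj] at h
    exact Subtype.ext (PNat.coe_injective h)
  have hecast : ∀ k, ((e k : ℤ):ℝ) = ((k : ℕ+):ℝ) - (j:ℝ) := by
    intro k
    simp only [hedef]
    push_cast
    ring
  set G : ℤ → ℝ := fun n => B ^ 2 * (1 / (n:ℝ) ^ 2) with hGdef
  have hGsummable : Summable G := hTsummable.mul_left (B ^ 2)
  have hgG : ∀ k, g k ^ 2 ≤ G (e k) := by
    intro k
    have h1 : g k ≤ B / |((k : ℕ+):ℝ) - (j:ℝ)| := hcoef j k k.2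
    have h2 : g k ^ 2 ≤ (B / |((k : ℕ+):ℝ) - (j:ℝ)|) ^ 2 := pow_le_pow_left₀ (hg0 k) h1 2
    have h3 : (B / |((k : ℕ+):ℝ) - (j:ℝ)|) ^ 2 = G (e k) := by
      simp only [hGdef, hecast k, div_pow, sq_abs]
      rw [div_eq_mul_one_div]
    rw [← h3]
    exact h2
  have hg2sum : Summable (fun k => g k ^ 2) :=
    Summable.of_nonneg_of_le (fun k => sq_nonneg _) hgG (hGsummable.comp_injective he)
  have htsumg : ∑' k, g k ^ 2 ≤ B ^ 2 * T := by
    calc ∑' k, g k ^ 2 ≤ ∑' n, G n :=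
          Summable.tsum_le_tsum_of_inj e he (fun n _ => by positivity) hgG hg2sum hGsummable
      _ = B ^ 2 * T := by rw [hGdef, hTdef]; exact tsum_mul_left
  have hf2sum : Summable (fun k : {k : ℕ+ // k ≠ j} => ‖c k‖ ^ 2) :=
    hc.comp_injective Subtype.val_injective
  have htsumf : ∑' k : {k : ℕ+ // k ≠ j}, ‖c k‖ ^ 2 ≤ ∑' k : ℕ+, ‖c k‖ ^ 2 :=
    Summable.tsum_le_tsum_of_inj Subtype.val Subtype.val_injective (fun k _ => sq_nonneg _)
      (fun k => le_refl _) hf2sum hc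
  have hnormeq : ∀ k : {k : ℕ+ // k ≠ j},
      ‖c k * ((a + mu k : ℝ) : ℂ) /
        (((a + mu k - mu j : ℝ) : ℂ) * ((Real.sqrt 2 * ((k : ℕ+) : ℝ) * π : ℝ) : ℂ))‖
      = ‖c k‖ * g k := by
    intro k
    rw [hgdef]
    rw [norm_div, norm_mul, norm_mul, Complex.norm_real, Complex.norm_real, Complex.norm_real,
      Real.norm_eq_abs, Real.norm_eq_abs, Real.norm_eq_abs, abs_of_pos (hpos2 _), mul_div_assoc]
  obtain ⟨hsumfg, hcs⟩ := tsum_cs (fun k : {k : ℕ+ // k ≠ j} => ‖c k‖) g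
    (fun k => norm_nonneg _) hg0 hf2sum hg2sum
  constructor
  · exact (summable_congr hnormeq).mpr hsumfg
  · have hb1 : ‖∑' k : {k : ℕ+ // k ≠ j},
        c k * ((a + mu k : ℝ) : ℂ) /
          (((a + mu k - mu j : ℝ) : ℂ) * ((Real.sqrt 2 * ((k : ℕ+) : ℝ) * π : ℝ) : ℂ))‖
        ≤ ∑' k : {k : ℕ+ // k ≠ j}, ‖c k‖ * g k := by
      calc _ ≤ ∑' k : {k : ℕ+ // k ≠ j}, ‖c k * ((a + mu k : ℝ) : ℂ) /
            (((a + mu k - mu j : ℝ) : ℂ) * ((Real.sqrt 2 * ((k : ℕ+) : ℝ) * π : ℝ) : ℂ))‖ :=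
            norm_tsum_le_tsum_norm ((summable_congr hnormeq).mpr hsumfg)
        _ = _ := tsum_congr hnormeq
    have hb2 : Real.sqrt (∑' k : {k : ℕ+ // k ≠ j}, ‖c k‖ ^ 2)
        ≤ Real.sqrt (∑' k : ℕ+, ‖c k‖ ^ 2) := Real.sqrt_le_sqrt htsumf
    have hb3 : Real.sqrt (∑' k, g k ^ 2) ≤ B * Real.sqrt T := by
      have : Real.sqrt (B ^ 2 * T) = B * Real.sqrt T := by
        rw [Real.sqrt_mul (sq_nonneg B), Real.sqrt_sq hB.le]
      rw [← this]
      exact Real.sqrt_le_sqrt htsumg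
    have hb4 : ∑' k : {k : ℕ+ // k ≠ j}, ‖c k‖ * g k
        ≤ Real.sqrt (∑' k : ℕ+, ‖c k‖ ^ 2) * (B * Real.sqrt T) :=
      hcs.trans (mul_le_mul hb2 hb3 (Real.sqrt_nonneg _) (Real.sqrt_nonneg _))
    have hb5 : Real.sqrt (∑' k : ℕ+, ‖c k‖ ^ 2) * (B * Real.sqrt T)
        ≤ (B * Real.sqrt T + 1) * Real.sqrt (∑' k : ℕ+, ‖c k‖ ^ 2) := by
      rw [mul_comm]
      exact mul_le_mul_of_nonneg_right (by linarith) (Real.sqrt_nonneg _)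
    calc _ ≤ _ := hb1
      _ ≤ _ := hb4.trans hb5
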